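/- A ring R is right cP-Baer if and only if the polynomial ring R[x] is right cP-Baer. -/

import Mathlib

open Polynomial

/-- Key lemma: if `f` is an idempotent polynomial and `a` right-annihilates
`(f.coeff 0) * R`, then `a` right-annihilates `(f.coeff n) * R` for every `n`. -/
private lemma coeff_kills {R : Type*} [Ring R] (f : Polynomial R) (hf : f * f = f) (a : R)
    (ha : ∀ r : R, f.coeff 0 * r * a = 0) : ∀ n, ∀ r : R, f.coeff n * r * a = 0 := by
  intro n
  induction n using Nat.strong_induction_on with
  | _ n ih =>
    intro r
    have h : (∑ x ∈ Finset.HasAntidiagonal.antidiagonal n, f.coeff x.1 * f.coeff x.2) = f.coeff n := by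
      rw [← Polynomial.coeff_mul, hf]
    have : f.coeff n * r * a
        = ∑ x ∈ Finset.HasAntidiagonal.antidiagonal n, f.coeff x.1 * f.coeff x.2 * r * a := by
      conv_lhs => rw [← h]
      rw [Finset.sum_mul, Finset.sum_mul]
    rw [this]
    apply Finset.sum_eq_zero
    rintro ⟨i, j⟩ hx
    have hij : i + j = n := Finset.HasAntidiagonal.mem_antidiagonal.mp hx
    rcases Nat.eq_zero_or_pos i with hi | hi
    · subst hi
      have := ha (f.coeff j * r)
      calc f.coeff 0 * f.coeff j * r * a = f.coeff 0 * (f.coeff j * r) * a := by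
            rw [mul_assoc (f.coeff 0)]
        _ = 0 := ha _
    · have hj : j < n := by omega
      calc f.coeff i * f.coeff j * r * a = f.coeff i * (f.coeff j * r * a) := by
            rw [mul_assoc, mul_assoc, mul_assoc]
        _ = 0 := by rw [ih j hj r, mul_zero]

/-- A ring `S` is right 𝔠𝔓-Baer if for every idempotent `e` of `S` there exists an
idempotent `c` with `r_S(eS) = cS`. -/
def IsRightCPBaer (S : Type*) [Ring S] : Prop :=
  ∀ e : S, e * e = e → ∃ c : S, c * c = c ∧
    ∀ a : S, (∀ r : S, e * r * a = 0) ↔ ∃ r : S, a = c * r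

/-- A ring `R` is right 𝔠𝔓-Baer iff the polynomial ring `R[x]` is right 𝔠𝔓-Baer. -/
theorem isRightCPBaer_iff_polynomial {R : Type*} [Ring R] :
    IsRightCPBaer R ↔ IsRightCPBaer (Polynomial R) := by
  constructor
  · -- R cP-Baer → R[x] cP-Baer
    intro hR f hf
    set e₀ := f.coeff 0 with he₀
    have he : e₀ * e₀ = e₀ := by
      have := congrArg (fun p => Polynomial.coeff p 0) hf
      simpa [Polynomial.mul_coeff_zero] using this
    obtain ⟨c, hc, hcann⟩ := hR e₀ he
    -- e₀ kills c on the right: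
    have hkc : ∀ r : R, e₀ * r * c = 0 := (hcann c).mpr ⟨c, hc.symm⟩
    -- hence every coefficient of f kills c:
    have hkc' : ∀ n, ∀ r : R, f.coeff n * r * c = 0 := coeff_kills f hf c hkc
    refine ⟨Polynomial.C c, by rw [← Polynomial.C_mul, hc], fun g => ?_⟩
    constructor
    · intro H
      -- show each coefficient of g is annihilated: e₀ * r * g.coeff j = 0
      have key : ∀ j, ∀ r : R, e₀ * r * g.coeff j = 0 := by
        intro j
        induction j using Nat.strong_induction_on with
        | _ j ih =>
          intro r
          have h0 : ((f * Polynomial.C r) * g).coeff j = 0 := by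
            rw [show f * Polynomial.C r * g = 0 from H (Polynomial.C r)]
            simp
          rw [Polynomial.coeff_mul] at h0
          have hsingle : (∑ x ∈ Finset.HasAntidiagonal.antidiagonal j,
              (f * Polynomial.C r).coeff x.1 * g.coeff x.2)
              = (f * Polynomial.C r).coeff 0 * g.coeff j := by
            apply Finset.sum_eq_single_of_mem (0, j)
            · exact Finset.HasAntidiagonal.mem_antidiagonal.mpr (by omega)
            · rintro ⟨i, j'⟩ hx hne
              have hij : i + j' = j := Finset.HasAntidiagonal.mem_antidiagonal.mp hx
              have hi : i ≠ 0 := by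
                intro h; apply hne; simp [h] at hij ⊢; omega
              have hj' : j' < j := by omega
              rw [Polynomial.coeff_mul_C]
              exact coeff_kills f hf (g.coeff j') (ih j' hj') i r
          rw [hsingle, Polynomial.coeff_mul_C] at h0
          simpa [he₀] using h0
      -- each coefficient is in cR, i.e. fixed by left mult by c
      have hfix : ∀ j, c * g.coeff j = g.coeff j := by
        intro j
        obtain ⟨r, hr⟩ := (hcann (g.coeff j)).mp (key j)
        rw [hr, ← mul_assoc, hc]
      refine ⟨g, ?_⟩
      ext j
      rw [Polynomial.coeff_C_mul, hfix j]
    · rintro ⟨p, rfl⟩ q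
      have h1 : f * q * Polynomial.C c = 0 := by
        ext k
        rw [Polynomial.coeff_mul_C, Polynomial.coeff_mul, Finset.sum_mul]
        rw [Polynomial.coeff_zero]
        apply Finset.sum_eq_zero
        rintro ⟨i, j⟩ _
        exact hkc' i (q.coeff j)
      rw [← mul_assoc, h1, zero_mul]
  · -- R[x] cP-Baer → R cP-Baer
    intro hT e he
    have heC : (Polynomial.C e : Polynomial R) * Polynomial.C e = Polynomial.C e := by
      rw [← Polynomial.C_mul, he]
    obtain ⟨c, hc, hcann⟩ := hT (Polynomial.C e) heC
    set c₀ := c.coeff 0 with hc₀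
    have hc₀idem : c₀ * c₀ = c₀ := by
      have := congrArg (fun p => Polynomial.coeff p 0) hc
      simpa [Polynomial.mul_coeff_zero] using this
    -- e kills c on the right (as polynomials):
    have hkc : ∀ p : Polynomial R, Polynomial.C e * p * c = 0 :=
      (hcann c).mpr ⟨c, hc.symm⟩
    refine ⟨c₀, hc₀idem, fun a => ?_⟩
    constructor
    · intro ha
      have hCa : ∀ p : Polynomial R, Polynomial.C e * p * Polynomial.C a = 0 := by
        intro p
        ext k
        rw [Polynomial.coeff_mul_C, Polynomial.coeff_C_mul, Polynomial.coeff_zero]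
        exact ha (p.coeff k)
      obtain ⟨q, hq⟩ := (hcann (Polynomial.C a)).mp hCa
      have : c * Polynomial.C a = Polynomial.C a := by
        rw [hq, ← mul_assoc, hc]
      have h0 := congrArg (fun p => Polynomial.coeff p 0) this
      simp only [Polynomial.coeff_mul_C, Polynomial.coeff_C_zero] at h0
      exact ⟨a, h0.symm⟩
    · rintro ⟨r, rfl⟩ s
      have h1 := hkc (Polynomial.C s)
      have h2 := congrArg (fun p => Polynomial.coeff p 0) h1
      simp only [Polynomial.coeff_zero] at h2
      rw [Polynomial.mul_coeff_zero, Polynomial.mul_coeff_zero,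
        Polynomial.coeff_C_zero, Polynomial.coeff_C_zero] at h2
      -- h2 : e * s * c₀ = 0
      rw [← mul_assoc, hc₀, h2, zero_mul]
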